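/- Let X be an order-N real tensor all of whose dimensions equal s, let 1 ≤ R ≤ s, and for each l ∈ {2,…,N} let A^{(l)} ∈ ℝ^{s×R} have orthonormal columns. Let Y^{(1)} = X ×₂ A^{(2)ᵀ} ⋯ ×_N A^{(N)ᵀ} and suppose ‖Y^{(1)}‖_F ≥ (R/s)^{N/2} ‖X‖_F (as is guaranteed when Tucker-ALS is initialized with the interlaced HOSVD). For distinct i, j ∈ {2,…,N}, let Y^{(i,j,1)} be X contracted in mode l with A^{(l)ᵀ} for every l ∈ {2,…,N}∖{i,j}, and let dA^{(i)}, dA^{(j)} ∈ ℝ^{s×R} satisfy ‖dA^{(i)}‖_F ≤ ε and ‖dA^{(j)}‖_F ≤ ε. Then ‖Y^{(i,j,1)} ×_i dA^{(i)ᵀ} ×_j dA^{(j)ᵀ}‖_F ≤ ε² (s/R)^{N/2} ‖Y^{(1)}‖_F. -/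

import Mathlib

open scoped BigOperators

/-- Euclidean (ℓ²) norm of a vector. -/
noncomputable def vnorm {n : ℕ} (v : Fin n → ℝ) : ℝ := Real.sqrt (∑ i, v i ^ 2)

/-- Frobenius norm: the ℓ² norm of all entries. -/
noncomputable def fnorm {ι : Type*} [Fintype ι] (T : ι → ℝ) : ℝ := Real.sqrt (∑ i, T i ^ 2)

/-- Matrix–vector product. -/
noncomputable def matvec {m n : ℕ} (M : Fin m → Fin n → ℝ) (x : Fin n → ℝ) : Fin m → ℝ :=
  fun i => ∑ j, M i j * x j

/-- Matrix–matrix product. -/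
noncomputable def matmul {m n p : ℕ} (A : Fin m → Fin n → ℝ) (B : Fin n → Fin p → ℝ) :
    Fin m → Fin p → ℝ :=
  fun i j => ∑ k, A i k * B k j

/-- Matrix spectral norm. -/
noncomputable def mnorm {m n : ℕ} (M : Fin m → Fin n → ℝ) : ℝ :=
  sSup {r | ∃ x : Fin n → ℝ, vnorm x = 1 ∧ r = vnorm (matvec M x)}

/-- `I(M)`: the infimum of `‖Mx‖₂` over unit vectors `x`. -/
noncomputable def minf {m n : ℕ} (M : Fin m → Fin n → ℝ) : ℝ :=
  sInf {r | ∃ x : Fin n → ℝ, vnorm x = 1 ∧ r = vnorm (matvec M x)}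

/-- Matrix Frobenius norm. -/
noncomputable def mfro {m n : ℕ} (M : Fin m → Fin n → ℝ) : ℝ :=
  Real.sqrt (∑ i, ∑ j, M i j ^ 2)

/-- The multilinear map `g_T` associated to an order-`(d+1)` tensor `T`;
mode `0` is the output mode, modes `1,…,d` are the input modes. -/
noncomputable def gmap {d : ℕ} {s : Fin (d+1) → ℕ} (T : (∀ i, Fin (s i)) → ℝ)
    (x : ∀ i, Fin (s i) → ℝ) : Fin (s 0) → ℝ :=
  fun i₁ => ∑ j : (∀ i, Fin (s i)),
    if j 0 = i₁ then T j * ∏ k ∈ Finset.univ.erase (0 : Fin (d+1)), x k (j k) else 0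

/-- The inputs `x i`, `i ≠ 0`, are all unit vectors. -/
def unitInputs {d : ℕ} {s : Fin (d+1) → ℕ} (x : ∀ i, Fin (s i) → ℝ) : Prop :=
  ∀ i : Fin (d+1), i ≠ 0 → vnorm (x i) = 1

/-- Tensor spectral norm: supremum of `‖g_T(x₂,…,x_N)‖₂` over unit inputs. -/
noncomputable def tnorm {d : ℕ} {s : Fin (d+1) → ℕ} (T : (∀ i, Fin (s i)) → ℝ) : ℝ :=
  sSup {r | ∃ x : (∀ i, Fin (s i) → ℝ), unitInputs x ∧ r = vnorm (gmap T x)}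

/-- `I(T)`: infimum of `‖g_T(x₂,…,x_N)‖₂` over unit inputs. -/
noncomputable def tinf {d : ℕ} {s : Fin (d+1) → ℕ} (T : (∀ i, Fin (s i)) → ℝ) : ℝ :=
  sInf {r | ∃ x : (∀ i, Fin (s i) → ℝ), unitInputs x ∧ r = vnorm (gmap T x)}

/-- Tensor condition number `κ(T) = ‖T‖₂ / I(T)`. -/
noncomputable def tcond {d : ℕ} {s : Fin (d+1) → ℕ} (T : (∀ i, Fin (s i)) → ℝ) : ℝ :=
  tnorm T / tinf T

/-- Dimensions after replacing the size of mode `n` by `J`. -/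
def repl {d : ℕ} (s : Fin (d+1) → ℕ) (n : Fin (d+1)) (J : ℕ) : Fin (d+1) → ℕ :=
  fun i => if i = n then J else s i

/-- Mode-`n` product `T ×ₙ A` with a matrix `A : Fin J → Fin (s n) → ℝ`:
`(T ×ₙ A)(i₁,…,a,…,i_N) = ∑ₖ T(i₁,…,k,…,i_N) A(a,k)`. -/
noncomputable def modeProd {d : ℕ} {s : Fin (d+1) → ℕ} (T : (∀ i, Fin (s i)) → ℝ)
    (n : Fin (d+1)) {J : ℕ} (A : Fin J → Fin (s n) → ℝ) :
    (∀ i, Fin (repl s n J i)) → ℝ :=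
  fun j => ∑ k : Fin (s n),
    T (fun i => if h : i = n then Fin.cast (congrArg s h.symm) k
        else Fin.cast (show repl s n J i = s i by simp [repl, h]) (j i)) *
      A (Fin.cast (show repl s n J n = J by simp [repl]) (j n)) k

/-- Multilinear transformation of a tensor: `multiProd X B = X ×₁ B₁ ×₂ ⋯ ×_N B_N`. -/
noncomputable def multiProd {d : ℕ} {s R : Fin (d+1) → ℕ}
    (X : (∀ i, Fin (s i)) → ℝ) (B : ∀ l, Fin (R l) → Fin (s l) → ℝ) :
    (∀ l, Fin (R l)) → ℝ :=
  fun j => ∑ k : (∀ l, Fin (s l)), X k * ∏ l, B l (j l) (k l)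

/-- Dimensions of `partialContract`: modes in `E` are kept at size `s l`,
the other modes are contracted down to size `R l`. -/
def keepDims {d : ℕ} (s R : Fin (d+1) → ℕ) (E : Finset (Fin (d+1))) : Fin (d+1) → ℕ :=
  fun l => if l ∈ E then s l else R l

/-- Contract every mode `l ∉ E` of `X` with `(A l)ᵀ`; keep the modes in `E` untouched. -/
noncomputable def partialContract {d : ℕ} {s R : Fin (d+1) → ℕ}
    (X : (∀ i, Fin (s i)) → ℝ) (A : ∀ l, Fin (s l) → Fin (R l) → ℝ)
    (E : Finset (Fin (d+1))) : (∀ l, Fin (keepDims s R E l)) → ℝ :=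
  multiProd X (fun l a b =>
    if h : l ∈ E then
      (if b = Fin.cast (show keepDims s R E l = s l by simp [keepDims, h]) a then (1:ℝ) else 0)
    else A l b (Fin.cast (show keepDims s R E l = R l by simp [keepDims, h]) a))


/- ### Auxiliary lemmas ### -/

lemma sum_sq_expand {α β : Type*} [Fintype α] [Fintype β]
    (u : β → α → ℝ) (y : α → ℝ) :
    ∑ t, ∑ t', y t * y t' * (∑ j : β, u j t * u j t') = ∑ j, (∑ t, u j t * y t)^2 := by
  have h : ∀ j, (∑ t, u j t * y t)^2 = ∑ t, ∑ t', y t * y t' * (u j t * u j t') := by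
    intro j
    rw [pow_two, Finset.sum_mul_sum]
    exact Finset.sum_congr rfl fun t _ => Finset.sum_congr rfl fun t' _ => by ring
  simp_rw [h, Finset.mul_sum]
  calc ∑ t, ∑ t', ∑ j, y t * y t' * (u j t * u j t')
      = ∑ t, ∑ j, ∑ t', y t * y t' * (u j t * u j t') :=
        Finset.sum_congr rfl fun t _ => Finset.sum_comm
    _ = ∑ j, ∑ t, ∑ t', y t * y t' * (u j t * u j t') := Finset.sum_comm

lemma bessel {s R : ℕ} (A : Fin s → Fin R → ℝ)
    (hA : ∀ k k' : Fin R, ∑ i, A i k * A i k' = if k = k' then (1:ℝ) else 0)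
    (t : Fin s → ℝ) :
    ∑ j, (∑ k, A k j * t k) ^ 2 ≤ ∑ k, t k ^ 2 := by
  set c : Fin R → ℝ := fun j => ∑ k, A k j * t k with hc
  have key : 0 ≤ ∑ k, (t k - ∑ j, A k j * c j)^2 :=
    Finset.sum_nonneg fun k _ => sq_nonneg _
  have e1 : ∑ k, (t k - ∑ j, A k j * c j)^2
      = ∑ k, t k ^2 - 2 * ∑ k, t k * (∑ j, A k j * c j)
        + ∑ k, (∑ j, A k j * c j)^2 := by
    rw [Finset.mul_sum, ← Finset.sum_sub_distrib, ← Finset.sum_add_distrib]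
    exact Finset.sum_congr rfl fun k _ => by ring
  have e2 : ∑ k, t k * (∑ j, A k j * c j) = ∑ j, c j ^ 2 := by
    simp_rw [Finset.mul_sum]
    rw [Finset.sum_comm]
    refine Finset.sum_congr rfl fun j _ => ?_
    have : ∑ k, t k * (A k j * c j) = (∑ k, A k j * t k) * c j := by
      rw [Finset.sum_mul]; exact Finset.sum_congr rfl fun k _ => by ring
    rw [this]
    have h2 : (∑ k, A k j * t k) = c j := rfl
    rw [h2]; ring
  have e3 : ∑ k, (∑ j, A k j * c j)^2 = ∑ j, c j ^ 2 := by
    rw [← sum_sq_expand (fun k j => A k j) c]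
    simp_rw [hA]
    simp [Finset.sum_ite_eq', pow_two]
  rw [e1, e2, e3] at key
  have : ∑ j, c j ^ 2 ≤ ∑ k, t k ^ 2 := by linarith
  exact this

lemma frob_bound {s R : ℕ} (M : Fin s → Fin R → ℝ) (t : Fin s → ℝ) :
    ∑ j, (∑ k, M k j * t k)^2 ≤ (∑ k, ∑ j, M k j ^2) * ∑ k, t k ^ 2 := by
  have h : ∀ j, (∑ k, M k j * t k)^2 ≤ (∑ k, M k j ^2) * ∑ k, t k ^ 2 :=
    fun j => Finset.sum_mul_sq_le_sq_mul_sq _ _ _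
  calc ∑ j, (∑ k, M k j * t k)^2 ≤ ∑ j, (∑ k, M k j ^2) * ∑ k, t k ^ 2 :=
        Finset.sum_le_sum fun j _ => h j
    _ = (∑ k, ∑ j, M k j ^2) * ∑ k, t k ^ 2 := by
        rw [← Finset.sum_mul, Finset.sum_comm]

noncomputable def Fq {d : ℕ} {s : Fin (d+1) → ℕ} (X : (∀ l, Fin (s l)) → ℝ)
    (K : ∀ l, Fin (s l) → Fin (s l) → ℝ) : ℝ :=
  ∑ k : (∀ l, Fin (s l)), ∑ k' : (∀ l, Fin (s l)), X k * X k' * ∏ l, K l (k l) (k' l)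

lemma group_sum {γ : Type*} [Fintype γ] {sa : ℕ} (idx : γ → Fin sa) (f : γ → ℝ)
    (h : Fin sa → ℝ) :
    ∑ t, (∑ k, if idx k = t then f k else 0) * h t = ∑ k, f k * h (idx k) := by
  simp_rw [Finset.sum_mul, ite_mul, zero_mul]
  rw [Finset.sum_comm]
  exact Finset.sum_congr rfl fun k _ => by simp [Finset.sum_ite_eq]

lemma regroup {γ : Type*} [Fintype γ] {sa : ℕ} (idx : γ → Fin sa) (f : γ → ℝ)
    (P : Fin sa → Fin sa → ℝ) :
    ∑ k, ∑ k', f k * f k' * P (idx k) (idx k')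
      = ∑ t, ∑ t', (∑ k, if idx k = t then f k else 0) *
          (∑ k', if idx k' = t' then f k' else 0) * P t t' := by
  set y : Fin sa → ℝ := fun t => ∑ k, if idx k = t then f k else 0 with hy
  calc ∑ k, ∑ k', f k * f k' * P (idx k) (idx k')
      = ∑ k, f k * ∑ k', f k' * P (idx k) (idx k') := by
        refine Finset.sum_congr rfl fun k _ => ?_
        rw [Finset.mul_sum]
        exact Finset.sum_congr rfl fun k' _ => by ring
    _ = ∑ k, f k * ∑ t', y t' * P (idx k) t' := by
        refine Finset.sum_congr rfl fun k _ => ?_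
        rw [group_sum idx f (P (idx k))]
    _ = ∑ t, y t * ∑ t', y t' * P t t' := by
        rw [group_sum idx f (fun t => ∑ t', y t' * P t t')]
    _ = ∑ t, ∑ t', y t * y t' * P t t' := by
        refine Finset.sum_congr rfl fun t _ => ?_
        rw [Finset.mul_sum]
        exact Finset.sum_congr rfl fun t' _ => by ring

lemma step_bound {d : ℕ} {s : Fin (d+1) → ℕ}
    (X : (∀ l, Fin (s l)) → ℝ) (a : Fin (d+1))
    (K : ∀ l, Fin (s l) → Fin (s l) → ℝ)
    (P' : Fin (s a) → Fin (s a) → ℝ)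
    (n : Fin (d+1) → ℕ) (hna : n a = 1)
    (W : ∀ l, Fin (n l) → Fin (s l) → ℝ)
    (hW : ∀ l, l ≠ a → ∀ u v, K l u v = ∑ q, W l q u * W l q v)
    (hWa : ∀ q u, W a q u = 1)
    (hP : ∀ y : Fin (s a) → ℝ,
      0 ≤ ∑ t, ∑ t', y t * y t' * (P' t t' - K a t t')) :
    Fq X K ≤ Fq X (Function.update K a P') := by
  -- difference formula
  have split : ∀ (Q : ∀ l, Fin (s l) → Fin (s l) → ℝ) (k k' : ∀ l, Fin (s l)),
      ∏ l, Q l (k l) (k' l) = Q a (k a) (k' a) * ∏ l ∈ Finset.univ.erase a, Q l (k l) (k' l) :=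
    fun Q k k' => (Finset.mul_prod_erase Finset.univ _ (Finset.mem_univ a)).symm
  have upd_off : ∀ (l : Fin (d+1)), l ≠ a → ∀ u v,
      Function.update K a P' l u v = K l u v := by
    intro l hl u v
    rw [Function.update_of_ne hl]
  -- Gram representation of the erased product
  have gram : ∀ (k k' : ∀ l, Fin (s l)),
      ∏ l ∈ Finset.univ.erase a, K l (k l) (k' l)
        = ∑ q : (∀ l, Fin (n l)), ∏ l, (W l (q l) (k l) * W l (q l) (k' l)) := by
    intro k k'
    have h1 : ∑ q : (∀ l, Fin (n l)), ∏ l, (W l (q l) (k l) * W l (q l) (k' l))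
        = ∏ l, ∑ q : Fin (n l), W l q (k l) * W l q (k' l) := by
      rw [Finset.prod_univ_sum]
      simp [Fintype.piFinset_univ]
    rw [h1, ← Finset.mul_prod_erase Finset.univ _ (Finset.mem_univ a)]
    rw [Finset.prod_congr rfl fun l hl => (hW l (Finset.ne_of_mem_erase hl) (k l) (k' l))]
    have ha : (∑ q : Fin (n a), W a q (k a) * W a q (k' a)) = 1 := by
      simp [hWa, hna]
    rw [ha, one_mul]
  -- the difference as a sum over q of quadratic forms
  set f : (∀ l, Fin (n l)) → (∀ l, Fin (s l)) → ℝ :=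
    fun q k => X k * ∏ l, W l (q l) (k l) with hf
  have diff : Fq X (Function.update K a P') - Fq X K
      = ∑ q : (∀ l, Fin (n l)), ∑ k, ∑ k', f q k * f q k' *
          (P' (k a) (k' a) - K a (k a) (k' a)) := by
    unfold Fq
    rw [← Finset.sum_sub_distrib]
    simp_rw [← Finset.sum_sub_distrib]
    have hterm : ∀ (k k' : ∀ l, Fin (s l)),
        X k * X k' * ∏ l, Function.update K a P' l (k l) (k' l)
          - X k * X k' * ∏ l, K l (k l) (k' l)
        = ∑ q : (∀ l, Fin (n l)), f q k * f q k' *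
            (P' (k a) (k' a) - K a (k a) (k' a)) := by
      intro k k'
      have e1 : ∏ l, Function.update K a P' l (k l) (k' l)
          = P' (k a) (k' a) * ∏ l ∈ Finset.univ.erase a, K l (k l) (k' l) := by
        rw [split]
        congr 1
        · simp
        · exact Finset.prod_congr rfl fun l hl =>
            upd_off l (Finset.ne_of_mem_erase hl) _ _
      have e2 : ∏ l, K l (k l) (k' l)
          = K a (k a) (k' a) * ∏ l ∈ Finset.univ.erase a, K l (k l) (k' l) :=
        split K k k'
      rw [e1, e2, ← mul_sub, ← sub_mul, gram k k', Finset.mul_sum, Finset.mul_sum]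
      refine Finset.sum_congr rfl fun q _ => ?_
      have e3 : ∏ l, (W l (q l) (k l) * W l (q l) (k' l))
          = (∏ l, W l (q l) (k l)) * ∏ l, W l (q l) (k' l) :=
        Finset.prod_mul_distrib
      simp only [hf, e3]
      ring
    simp_rw [hterm]
    exact Eq.trans (Finset.sum_congr rfl fun k _ => Finset.sum_comm) Finset.sum_comm
  have nonneg : 0 ≤ Fq X (Function.update K a P') - Fq X K := by
    rw [diff]
    refine Finset.sum_nonneg fun q _ => ?_
    have := regroup (fun k : (∀ l, Fin (s l)) => k a) (f q)
      (fun t t' => P' t t' - K a t t')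
    rw [this]
    exact hP _
  linarith

lemma delta_gram {sl : ℕ} (c : ℝ) (u v : Fin sl) :
    ∑ p : Fin sl, (c * (if u = p then 1 else 0)) * (c * (if v = p then 1 else 0))
      = c^2 * (if u = v then 1 else 0) := by
  rcases eq_or_ne u v with h|h
  · subst h
    simp [mul_ite, ite_mul, mul_zero, zero_mul, mul_one, Finset.sum_ite_eq, pow_two]
  · rw [if_neg h, mul_zero]
    refine Finset.sum_eq_zero fun p _ => ?_
    rcases eq_or_ne u p with h1|h1
    · rw [if_neg (fun hh : v = p => h (h1.trans hh.symm)), mul_zero, mul_zero]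
    · rw [if_neg h1, mul_zero, zero_mul]
lemma multi_sq {d : ℕ} {s m : Fin (d+1) → ℕ}
    (X : (∀ l, Fin (s l)) → ℝ) (B : ∀ l, Fin (m l) → Fin (s l) → ℝ) :
    ∑ j : (∀ l, Fin (m l)), (∑ k, X k * ∏ l, B l (j l) (k l))^2
      = Fq X (fun l a b => ∑ q : Fin (m l), B l q a * B l q b) := by
  unfold Fq
  have h1 : ∀ j : (∀ l, Fin (m l)), (∑ k, X k * ∏ l, B l (j l) (k l))^2
      = ∑ k, ∑ k', X k * X k' * ∏ l, (B l (j l) (k l) * B l (j l) (k' l)) := by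
    intro j
    rw [pow_two, Finset.sum_mul_sum]
    refine Finset.sum_congr rfl fun k _ => Finset.sum_congr rfl fun k' _ => ?_
    rw [Finset.prod_mul_distrib]; ring
  simp_rw [h1]
  rw [Finset.sum_comm]
  refine Finset.sum_congr rfl fun k _ => ?_
  rw [Finset.sum_comm]
  refine Finset.sum_congr rfl fun k' _ => ?_
  rw [← Finset.mul_sum]
  congr 1
  rw [Finset.prod_univ_sum]
  simp [Fintype.piFinset_univ]

def nAux {d : ℕ} (m s : Fin (d+1) → ℕ) (S : Finset (Fin (d+1))) (a : Fin (d+1)) :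
    Fin (d+1) → ℕ :=
  fun l => if l = a then 1 else if l ∈ S then m l else s l

noncomputable def WAux {d : ℕ} {s m : Fin (d+1) → ℕ}
    (B : ∀ l, Fin (m l) → Fin (s l) → ℝ) (C : Fin (d+1) → ℝ)
    (S : Finset (Fin (d+1))) (a : Fin (d+1)) :
    ∀ l, Fin (nAux m s S a l) → Fin (s l) → ℝ :=
  fun l =>
    if h : l = a then fun _ _ => 1
    else if h2 : l ∈ S then
      fun q b => B l (Fin.cast (by simp [nAux, h, h2]) q) b
    else
      fun q b => C l * (if b = Fin.cast (by simp [nAux, h, h2]) q then 1 else 0)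

lemma contraction_bound {d : ℕ} {s m : Fin (d+1) → ℕ}
    (X : (∀ l, Fin (s l)) → ℝ) (B : ∀ l, Fin (m l) → Fin (s l) → ℝ)
    (C : Fin (d+1) → ℝ)
    (hB : ∀ l (t : Fin (s l) → ℝ),
      ∑ q, (∑ k, B l q k * t k)^2 ≤ C l ^ 2 * ∑ k, t k ^ 2) :
    ∑ j : (∀ l, Fin (m l)), (∑ k, X k * ∏ l, B l (j l) (k l))^2
      ≤ (∏ l, C l ^ 2) * ∑ k, X k ^ 2 := by
  set G : ∀ l, Fin (s l) → Fin (s l) → ℝ :=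
    fun l a b => ∑ q, B l q a * B l q b with hG
  set D : ∀ l, Fin (s l) → Fin (s l) → ℝ :=
    fun l a b => C l ^ 2 * (if a = b then 1 else 0) with hD
  set KS : Finset (Fin (d+1)) → ∀ l, Fin (s l) → Fin (s l) → ℝ :=
    fun S l => if l ∈ S then G l else D l with hKS
  -- one contraction step
  have step : ∀ (a : Fin (d+1)) (S : Finset (Fin (d+1))), a ∉ S →
      Fq X (KS (insert a S)) ≤ Fq X (KS S) := by
    intro a S ha
    have keq : KS S = Function.update (KS (insert a S)) a (D a) := by
      funext l
      rcases eq_or_ne l a with h|h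
      · subst h
        rw [Function.update_self]
        simp [hKS, ha]
      · rw [Function.update_of_ne h]
        simp only [hKS]
        rcases Finset.decidableMem l S with _|_ <;>
          simp [Finset.mem_insert, h, *]
    rw [keq]
    refine step_bound X a (KS (insert a S)) (D a) (nAux m s S a) (by simp [nAux])
      (WAux B C S a) ?_ ?_ ?_
    · -- Gram representation of off-a kernels
      intro l hl u v
      have hKl : KS (insert a S) l = if l ∈ S then G l else D l := by
        simp only [hKS, Finset.mem_insert, hl, false_or]
      rcases em (l ∈ S) with h2|h2
      · rw [hKl, if_pos h2]
        have e : nAux m s S a l = m l := by simp [nAux, hl, h2]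
        have hw : ∀ q : Fin (nAux m s S a l), ∀ b, WAux B C S a l q b
            = B l (Fin.cast e q) b := by
          intro q b
          simp only [WAux, dif_neg hl, dif_pos h2]
        simp only [hw]
        exact (Fintype.sum_equiv (finCongr e) _ _ (fun q => rfl)).symm
      · rw [hKl, if_neg h2]
        have e : nAux m s S a l = s l := by simp [nAux, hl, h2]
        have hw : ∀ q : Fin (nAux m s S a l), ∀ b, WAux B C S a l q b
            = C l * (if b = Fin.cast e q then 1 else 0) := by
          intro q b
          simp only [WAux, dif_neg hl, dif_neg h2]
        simp only [hw]
        rw [Fintype.sum_equiv (finCongr e)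
          (fun q => (C l * if u = Fin.cast e q then 1 else 0) *
            (C l * if v = Fin.cast e q then 1 else 0))
          (fun p => (C l * if u = p then 1 else 0) * (C l * if v = p then 1 else 0))
          (fun q => rfl)]
        rw [delta_gram]
    · intro q u
      simp [WAux]
    · -- positivity at mode a
      intro y
      have hKa : KS (insert a S) a = G a := by
        simp [hKS]
      rw [hKa]
      have e1 : ∑ t, ∑ t', y t * y t' * (D a t t' - G a t t')
          = (∑ t, ∑ t', y t * y t' * D a t t')
            - ∑ t, ∑ t', y t * y t' * G a t t' := by
        rw [← Finset.sum_sub_distrib]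
        refine Finset.sum_congr rfl fun t _ => ?_
        rw [← Finset.sum_sub_distrib]
        exact Finset.sum_congr rfl fun t' _ => by ring
      have e2 : ∑ t, ∑ t', y t * y t' * D a t t' = C a ^ 2 * ∑ t, y t ^ 2 := by
        simp only [hD]
        rw [Finset.mul_sum]
        refine Finset.sum_congr rfl fun t _ => ?_
        simp [mul_ite, ite_mul, mul_zero, zero_mul, Finset.sum_ite_eq, pow_two]
        ring
      have e3 : ∑ t, ∑ t', y t * y t' * G a t t'
          = ∑ q, (∑ t, B a q t * y t)^2 := by
        simp only [hG]
        exact sum_sq_expand _ _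
      rw [e1, e2, e3]
      have := hB a y
      linarith
  -- induction to the empty set
  have main : ∀ S : Finset (Fin (d+1)), Fq X (KS S) ≤ Fq X (KS ∅) := by
    intro S
    induction S using Finset.induction_on with
    | empty => exact le_refl _
    | @insert a S ha ih => exact (step a S ha).trans ih
  have lhs_eq : ∑ j : (∀ l, Fin (m l)), (∑ k, X k * ∏ l, B l (j l) (k l))^2
      = Fq X (KS Finset.univ) := by
    rw [multi_sq X B]
    congr 1
    funext l a b
    simp [hKS, hG]
  have rhs_eq : Fq X (KS ∅) = (∏ l, C l ^ 2) * ∑ k, X k ^ 2 := by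
    unfold Fq
    have hk : ∀ k k' : (∀ l, Fin (s l)),
        ∏ l, KS ∅ l (k l) (k' l) = (∏ l, C l ^ 2) * (if k = k' then 1 else 0) := by
      intro k k'
      have : ∀ l, KS ∅ l (k l) (k' l) = C l ^ 2 * (if k l = k' l then 1 else 0) := by
        intro l; simp [hKS, hD]
      simp only [this]
      rw [Finset.prod_mul_distrib, Finset.prod_boole]
      congr 1
      by_cases h : k = k'
      · simp [h]
      · rw [if_neg (fun hh => h (funext fun l => hh l (Finset.mem_univ l))), if_neg h]
    simp only [hk]
    rw [Finset.mul_sum]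
    refine Finset.sum_congr rfl fun k _ => ?_
    simp [mul_ite, ite_mul, mul_zero, zero_mul, Finset.sum_ite_eq, pow_two]
    ring
  rw [lhs_eq, ← rhs_eq]
  exact main Finset.univ

/-- per-term inequality of Theorem 4.9 of the paper. `X` is an order-`N`
tensor (`N = d+1`, mode `0` playing the role of mode 1) with all dimensions equal to `sdim`,
`1 ≤ R ≤ sdim`, each `A l` (`l ≠ 0`) has orthonormal columns,
`Y¹ = X ×₂ A²ᵀ ⋯ ×_N A^Nᵀ` satisfies `‖Y¹‖_F ≥ (R/s)^{N/2}‖X‖_F` (guaranteed by interlaced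
HOSVD initialization), and `‖dA^{(i)}‖_F ≤ ε`, `‖dA^{(j)}‖_F ≤ ε`. Then
`‖Y^{(i,j,1)} ×ᵢ dA^{(i)ᵀ} ×ⱼ dA^{(j)ᵀ}‖_F ≤ ε² (s/R)^{N/2} ‖Y¹‖_F`. -/
theorem tucker_pp_second_order_term_frobenius {d sdim R : ℕ} (hR1 : 1 ≤ R) (hRs : R ≤ sdim)
    (X : (∀ _ : Fin (d+1), Fin sdim) → ℝ)
    (A : Fin (d+1) → Fin sdim → Fin R → ℝ)
    (hA : ∀ l : Fin (d+1), l ≠ 0 →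
      ∀ k k' : Fin R, ∑ i, A l i k * A l i k' = if k = k' then (1:ℝ) else 0)
    (hY : ((R : ℝ) / (sdim : ℝ)) ^ (((d : ℝ) + 1) / 2) * fnorm X ≤
      fnorm (partialContract X A {0}))
    (i j : Fin (d+1)) (hi : i ≠ 0) (hj : j ≠ 0) (hij : i ≠ j)
    (dAi dAj : Fin sdim → Fin R → ℝ) (ε : ℝ)
    (hdAi : mfro dAi ≤ ε) (hdAj : mfro dAj ≤ ε) :
    fnorm (partialContract X (Function.update (Function.update A i dAi) j dAj) {0}) ≤
      ε^2 * ((sdim : ℝ) / (R : ℝ)) ^ (((d : ℝ) + 1) / 2) * fnorm (partialContract X A {0}) := by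
  classical
  have hε0 : 0 ≤ ε := le_trans (Real.sqrt_nonneg _) hdAi
  set A' : Fin (d+1) → Fin sdim → Fin R → ℝ :=
    Function.update (Function.update A i dAi) j dAj with hA'
  have hA'i : A' i = dAi := by
    rw [hA', Function.update_of_ne hij, Function.update_self]
  have hA'j : A' j = dAj := by
    rw [hA', Function.update_self]
  have hA'other : ∀ l, l ≠ i → l ≠ j → A' l = A l := by
    intro l h1 h2
    rw [hA', Function.update_of_ne h2, Function.update_of_ne h1]
  set sf : Fin (d+1) → ℕ := fun _ => sdim with hsf
  set Rf : Fin (d+1) → ℕ := fun _ => R with hRf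
  set mf : Fin (d+1) → ℕ := keepDims sf Rf {0} with hmf
  set Bfun : ∀ l, Fin (mf l) → Fin (sf l) → ℝ := fun l a b =>
    if h : l ∈ ({0} : Finset (Fin (d+1))) then
      (if b = Fin.cast (show mf l = sf l by simp [hmf, keepDims, h]) a then (1:ℝ) else 0)
    else A' l b (Fin.cast (show mf l = Rf l by simp [hmf, keepDims, h]) a) with hBfun
  set Cf : Fin (d+1) → ℝ := fun l => if l = i then ε else if l = j then ε else 1 with hCf
  -- per-mode operator bounds
  have hB : ∀ l (t : Fin (sf l) → ℝ),
      ∑ q, (∑ k, Bfun l q k * t k)^2 ≤ Cf l ^ 2 * ∑ k, t k ^ 2 := by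
    intro l t
    rcases em (l = (0 : Fin (d+1))) with h0|h0
    · subst h0
      have hmem : (0 : Fin (d+1)) ∈ ({0} : Finset (Fin (d+1))) := by simp
      have e0 : mf (0 : Fin (d+1)) = sdim := by simp [hmf, keepDims, hsf]
      have hb : ∀ (q : Fin (mf (0:Fin (d+1)))) (b : Fin sdim),
          Bfun 0 q b = (if b = Fin.cast e0 q then 1 else 0) := by
        intro q b
        simp only [hBfun, dif_pos hmem]
      simp only [hb]
      have hinner : ∀ q : Fin (mf (0:Fin (d+1))),
          (∑ k, (if k = Fin.cast e0 q then (1:ℝ) else 0) * t k) = t (Fin.cast e0 q) := by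
        intro q
        simp [ite_mul, zero_mul, one_mul, Finset.sum_ite_eq']
      refine le_trans (le_of_eq (b := ∑ q : Fin (mf (0:Fin (d+1))), t (Fin.cast e0 q) ^ 2)
        (Finset.sum_congr rfl fun q _ => congrArg (fun x : ℝ => x ^ 2) (hinner q))) ?_
      have hC0 : Cf (0 : Fin (d+1)) = 1 := by
        simp [hCf, Ne.symm hi, Ne.symm hj]
      rw [hC0]
      rw [Fintype.sum_equiv (finCongr e0) (fun q => t (Fin.cast e0 q) ^ 2)
        (fun p => t p ^ 2) (fun q => rfl)]
      simp
      exact le_rfl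
    · have hmem : l ∉ ({0} : Finset (Fin (d+1))) := by simp [h0]
      have el : mf l = R := by simp [hmf, keepDims, hmem, hRf]
      have hb : ∀ (q : Fin (mf l)) (b : Fin sdim),
          Bfun l q b = A' l b (Fin.cast el q) := by
        intro q b
        simp only [hBfun, dif_neg hmem]
      simp only [hb]
      rw [Fintype.sum_equiv (finCongr el)
        (fun q : Fin (mf l) => (∑ k, A' l k (Fin.cast el q) * t k) ^ 2)
        (fun p : Fin R => (∑ k, A' l k p * t k) ^ 2) (fun q => rfl)]
      rcases em (l = i) with hli|hli
      · subst hli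
        rw [hA'i]
        have hCl : Cf l = ε := by simp [hCf]
        rw [hCl]
        refine le_trans (frob_bound dAi t) ?_
        have hsum : ∑ k, ∑ q, dAi k q ^ 2 ≤ ε ^ 2 := by
          have h1 : Real.sqrt (∑ k, ∑ q, dAi k q ^ 2) ≤ ε := hdAi
          have h2 : 0 ≤ ∑ k, ∑ q, dAi k q ^ 2 :=
            Finset.sum_nonneg fun k _ => Finset.sum_nonneg fun q _ => sq_nonneg _
          nlinarith [Real.sq_sqrt h2, Real.sqrt_nonneg (∑ k, ∑ q, dAi k q ^ 2)]
        have ht : 0 ≤ ∑ k, t k ^ 2 := Finset.sum_nonneg fun k _ => sq_nonneg _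
        exact mul_le_mul_of_nonneg_right hsum ht
      · rcases em (l = j) with hlj|hlj
        · subst hlj
          rw [hA'j]
          have hCl : Cf l = ε := by simp [hCf, hli]
          rw [hCl]
          refine le_trans (frob_bound dAj t) ?_
          have hsum : ∑ k, ∑ q, dAj k q ^ 2 ≤ ε ^ 2 := by
            have h1 : Real.sqrt (∑ k, ∑ q, dAj k q ^ 2) ≤ ε := hdAj
            have h2 : 0 ≤ ∑ k, ∑ q, dAj k q ^ 2 :=
              Finset.sum_nonneg fun k _ => Finset.sum_nonneg fun q _ => sq_nonneg _
            nlinarith [Real.sq_sqrt h2, Real.sqrt_nonneg (∑ k, ∑ q, dAj k q ^ 2)]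
          have ht : 0 ≤ ∑ k, t k ^ 2 := Finset.sum_nonneg fun k _ => sq_nonneg _
          exact mul_le_mul_of_nonneg_right hsum ht
        · rw [hA'other l hli hlj]
          have hCl : Cf l = 1 := by simp [hCf, hli, hlj]
          rw [hCl, one_pow, one_mul]
          exact bessel (A l) (hA l h0) t
  -- apply the contraction bound
  have hmain := contraction_bound X Bfun Cf hB
  have hprod : ∏ l, Cf l ^ 2 = (ε ^ 2) ^ 2 := by
    rw [← Finset.mul_prod_erase Finset.univ (fun l => Cf l ^ 2) (Finset.mem_univ i)]
    rw [← Finset.mul_prod_erase (Finset.univ.erase i) (fun l => Cf l ^ 2)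
      (Finset.mem_erase.mpr ⟨Ne.symm hij, Finset.mem_univ j⟩)]
    have h1 : Cf i = ε := by simp [hCf]
    have h2 : Cf j = ε := by simp [hCf, Ne.symm hij]
    have h3 : ∏ l ∈ (Finset.univ.erase i).erase j, Cf l ^ 2 = 1 := by
      refine Finset.prod_eq_one fun l hl => ?_
      have hlj : l ≠ j := (Finset.mem_erase.mp hl).1
      have hli : l ≠ i := (Finset.mem_erase.mp (Finset.mem_erase.mp hl).2).1
      simp [hCf, hli, hlj]
    rw [h1, h2, h3]
    ring
  rw [hprod] at hmain
  -- from the multiProd form to fnorm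
  have hpc : partialContract X A' ({0} : Finset (Fin (d+1))) = multiProd X Bfun := rfl
  have hfn : fnorm (partialContract X A' ({0} : Finset (Fin (d+1)))) ≤ ε ^ 2 * fnorm X := by
    rw [hpc]
    unfold fnorm
    have hms : ∀ q, multiProd X Bfun q = ∑ k, X k * ∏ l, Bfun l (q l) (k l) := fun q => rfl
    calc Real.sqrt (∑ q, multiProd X Bfun q ^ 2)
        ≤ Real.sqrt ((ε ^ 2) ^ 2 * ∑ k, X k ^ 2) := by
          refine Real.sqrt_le_sqrt ?_
          simpa only [hms] using hmain
      _ = ε ^ 2 * Real.sqrt (∑ k, X k ^ 2) := by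
          rw [Real.sqrt_mul (sq_nonneg _), Real.sqrt_sq (sq_nonneg ε)]
  -- bound fnorm X by the contracted tensor
  have hRpos : (0:ℝ) < (R:ℝ) := by exact_mod_cast hR1
  have hspos : (0:ℝ) < (sdim:ℝ) := by
    have : 1 ≤ sdim := le_trans hR1 hRs
    exact_mod_cast this
  set p : ℝ := ((d:ℝ)+1)/2 with hp
  have hapos : (0:ℝ) < ((R:ℝ)/(sdim:ℝ)) ^ p := Real.rpow_pos_of_pos (div_pos hRpos hspos) _
  have hinv : ((sdim:ℝ)/(R:ℝ)) ^ p = (((R:ℝ)/(sdim:ℝ)) ^ p)⁻¹ := by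
    rw [← Real.inv_rpow (le_of_lt (div_pos hRpos hspos))]
    congr 1
    rw [inv_div]
  have hX : fnorm X ≤ ((sdim:ℝ)/(R:ℝ)) ^ p * fnorm (partialContract X A ({0} : Finset (Fin (d+1)))) := by
    rw [hinv]
    rw [le_inv_mul_iff₀ hapos]
    exact hY
  calc fnorm (partialContract X A' ({0} : Finset (Fin (d+1))))
      ≤ ε ^ 2 * fnorm X := hfn
    _ ≤ ε ^ 2 * (((sdim:ℝ)/(R:ℝ)) ^ p * fnorm (partialContract X A ({0} : Finset (Fin (d+1))))) := by
        refine mul_le_mul_of_nonneg_left hX (sq_nonneg ε)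
    _ = ε ^ 2 * ((sdim:ℝ)/(R:ℝ)) ^ p * fnorm (partialContract X A ({0} : Finset (Fin (d+1)))) := by
        ring
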